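/- Let A ∈ ℝ^{m×m} and C ∈ ℝ^{n×n} be symmetric real matrices, B ∈ ℝ^{m×n}, η ∈ ℝ, and set μ = min(λ_min(BBᵀ), λ_min(BᵀB)) and c = max(‖I_m − ηA‖_op², ‖I_n + ηC‖_op²) / (1 + η²μ). Suppose c < 1 and that the sequence (θ_t, φ_t)_{t≥0} satisfies the implicit linearized SPPM recursion θ_{t+1} = θ_t − ηAθ_t − ηBφ_{t+1}, φ_{t+1} = φ_t + ηBᵀθ_{t+1} + ηCφ_t for all t. Then ‖θ_t‖² + ‖φ_t‖² ≤ c^t (‖θ_0‖² + ‖φ_0‖²) for all t, and in particular (θ_t, φ_t) converges to (0, 0) as t → ∞. -/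

import Mathlib

open Matrix Filter Topology

/-- The squared Euclidean norm of a vector `v : ι → ℝ`. -/
noncomputable def eNormSq {ι : Type*} [Fintype ι] (v : ι → ℝ) : ℝ :=
  ‖(EuclideanSpace.equiv ι ℝ).symm v‖ ^ 2

lemma eNormSq_eq_dot {ι : Type*} [Fintype ι] (v : ι → ℝ) : eNormSq v = v ⬝ᵥ v := by
  simp [eNormSq, EuclideanSpace.norm_eq, dotProduct, Real.sq_sqrt,
    Finset.sum_nonneg fun i _ => sq_nonneg (v i), Real.norm_eq_abs, sq_abs, sq,
    Real.mul_self_sqrt (Finset.sum_nonneg fun i _ => mul_self_nonneg (v i))]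

lemma dot_self_nonneg {ι : Type*} [Fintype ι] (v : ι → ℝ) : 0 ≤ v ⬝ᵥ v :=
  Finset.sum_nonneg fun i _ => mul_self_nonneg (v i)

lemma mulVec_dot {a b : Type*} [Fintype a] [Fintype b] (M : Matrix a b ℝ) (x : b → ℝ) (y : a → ℝ) :
    (M *ᵥ x) ⬝ᵥ y = x ⬝ᵥ (Mᵀ *ᵥ y) := by
  rw [dotProduct_mulVec, vecMul_transpose]

lemma dot_expand {ι : Type*} [Fintype ι] (x y : ι → ℝ) (s : ℝ) :
    (x + s • y) ⬝ᵥ (x + s • y) = x ⬝ᵥ x + 2 * s * (x ⬝ᵥ y) + s ^ 2 * (y ⬝ᵥ y) := by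
  simp only [dotProduct_add, add_dotProduct, dotProduct_smul, smul_dotProduct, smul_eq_mul,
    dotProduct_comm y x]
  ring

lemma opnorm_mulVec {k : Type*} [Fintype k] [DecidableEq k] (M : Matrix k k ℝ) (x : k → ℝ) :
    (M *ᵥ x) ⬝ᵥ (M *ᵥ x) ≤ ‖Matrix.toEuclideanCLM (𝕜 := ℝ) M‖ ^ 2 * (x ⬝ᵥ x) := by
  have h := (toEuclideanCLM (𝕜 := ℝ) M).le_opNorm ((WithLp.equiv 2 _).symm x)
  change ‖(WithLp.equiv 2 (k → ℝ)).symm (M *ᵥ x)‖ ≤ _ at h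
  have h1 : (M *ᵥ x) ⬝ᵥ (M *ᵥ x) = ‖(WithLp.equiv 2 (k → ℝ)).symm (M *ᵥ x)‖ ^ 2 :=
    (eNormSq_eq_dot _).symm
  have h2 : x ⬝ᵥ x = ‖(WithLp.equiv 2 (k → ℝ)).symm x‖ ^ 2 := (eNormSq_eq_dot _).symm
  rw [h1, h2]
  calc ‖(WithLp.equiv 2 (k → ℝ)).symm (M *ᵥ x)‖ ^ 2
      ≤ (‖toEuclideanCLM (𝕜 := ℝ) M‖ * ‖(WithLp.equiv 2 (k → ℝ)).symm x‖) ^ 2 :=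
        pow_le_pow_left₀ (norm_nonneg _) h 2
    _ = _ := by ring

lemma rayleigh {k : Type*} [Fintype k] [DecidableEq k] {M : Matrix k k ℝ} (hM : M.IsHermitian)
    {l : ℝ} (hl : ∀ i, l ≤ hM.eigenvalues i) (x : k → ℝ) :
    l * (x ⬝ᵥ x) ≤ x ⬝ᵥ (M *ᵥ x) := by
  set U : Matrix k k ℝ := (hM.eigenvectorUnitary : Matrix k k ℝ) with hU
  have hps : (M - l • 1).PosSemidef := by
    have hdiag : (diagonal (fun i => hM.eigenvalues i - l) : Matrix k k ℝ).PosSemidef :=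
      posSemidef_diagonal_iff.mpr fun i => sub_nonneg.mpr (hl i)
    have h2 := hdiag.mul_mul_conjTranspose_same U
    have h3 : U * diagonal (fun i => hM.eigenvalues i - l) * Uᴴ = M - l • 1 := by
      have hUU : U * Uᴴ = 1 := Matrix.mem_unitaryGroup_iff.mp hM.eigenvectorUnitary.2
      calc U * diagonal (fun i => hM.eigenvalues i - l) * Uᴴ
          = U * (diagonal hM.eigenvalues - diagonal (fun _ => l)) * Uᴴ := by
            rw [diagonal_sub]
        _ = U * diagonal hM.eigenvalues * Uᴴ - U * diagonal (fun _ => l) * Uᴴ := by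
            rw [Matrix.mul_sub, Matrix.sub_mul]
        _ = M - l • 1 := by
            rw [← smul_one_eq_diagonal]
            have : U * diagonal hM.eigenvalues * Uᴴ = M := by
              rw [← Matrix.star_eq_conjTranspose]
              convert hM.spectral_theorem.symm using 3
              rw [Unitary.conjStarAlgAut_apply]; rfl
            rw [this, Matrix.mul_smul, mul_one, Matrix.smul_mul, hUU]
    rw [← h3]; exact h2
  have h4 := hps.dotProduct_mulVec_nonneg x
  simp only [RCLike.re_to_real, star_trivial] at h4
  have h5 : (M - l • 1) *ᵥ x = M *ᵥ x - l • x := by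
    rw [sub_mulVec, smul_mulVec, one_mulVec]
  rw [h5, dotProduct_sub, dotProduct_smul] at h4
  have h6 : l • (x ⬝ᵥ x) = l * (x ⬝ᵥ x) := rfl
  rw [h6] at h4
  linarith

/-- if the contraction factor `c < 1` then the linearized SPPM iterates decay
geometrically and converge to the stationary point (asymptotic convergence part of Theorem 2). -/
theorem linearized_sppm_asymptotic_convergence
    (m n : ℕ) (A : Matrix (Fin m) (Fin m) ℝ) (C : Matrix (Fin n) (Fin n) ℝ)
    (B : Matrix (Fin m) (Fin n) ℝ) (η : ℝ)
    (hA : A.IsHermitian) (hC : C.IsHermitian)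
    (hBBt : (B * Bᵀ).IsHermitian) (hBtB : (Bᵀ * B).IsHermitian)
    (lmin₁ lmin₂ μ c : ℝ)
    (hlmin₁ : IsLeast (Set.range hBBt.eigenvalues) lmin₁)
    (hlmin₂ : IsLeast (Set.range hBtB.eigenvalues) lmin₂)
    (hμ : μ = min lmin₁ lmin₂)
    (hc : c = max (‖Matrix.toEuclideanCLM (𝕜 := ℝ) ((1 : Matrix (Fin m) (Fin m) ℝ) - η • A)‖ ^ 2)
            (‖Matrix.toEuclideanCLM (𝕜 := ℝ) ((1 : Matrix (Fin n) (Fin n) ℝ) + η • C)‖ ^ 2) /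
          (1 + η ^ 2 * μ))
    (hc1 : c < 1)
    (Θ : ℕ → Fin m → ℝ) (Φ : ℕ → Fin n → ℝ)
    (hΘ : ∀ t : ℕ, Θ (t + 1) = Θ t - η • (A *ᵥ Θ t) - η • (B *ᵥ Φ (t + 1)))
    (hΦ : ∀ t : ℕ, Φ (t + 1) = Φ t + η • (Bᵀ *ᵥ Θ (t + 1)) + η • (C *ᵥ Φ t)) :
    (∀ t : ℕ, eNormSq (Θ t) + eNormSq (Φ t) ≤ c ^ t * (eNormSq (Θ 0) + eNormSq (Φ 0))) ∧
    Tendsto (fun t => (Θ t, Φ t)) atTop (𝓝 (0, 0)) := by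
  -- μ ≥ 0
  have hBBtps : (B * Bᵀ).PosSemidef := by
    have := posSemidef_self_mul_conjTranspose B
    rwa [conjTranspose_eq_transpose_of_trivial] at this
  have hBtBps : (Bᵀ * B).PosSemidef := by
    have := posSemidef_conjTranspose_mul_self B
    rwa [conjTranspose_eq_transpose_of_trivial] at this
  have hl1 : 0 ≤ lmin₁ := by
    obtain ⟨i, hi⟩ := hlmin₁.1
    exact hi ▸ hBBtps.eigenvalues_nonneg i
  have hl2 : 0 ≤ lmin₂ := by
    obtain ⟨i, hi⟩ := hlmin₂.1
    exact hi ▸ hBtBps.eigenvalues_nonneg i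
  have hμ0 : 0 ≤ μ := hμ ▸ le_min hl1 hl2
  have hden : (0 : ℝ) < 1 + η ^ 2 * μ := by positivity
  have hc0 : 0 ≤ c := by
    rw [hc]
    exact div_nonneg (le_max_of_le_left (sq_nonneg _)) hden.le
  -- one-step contraction
  have key : ∀ t : ℕ, (Θ (t+1)) ⬝ᵥ (Θ (t+1)) + (Φ (t+1)) ⬝ᵥ (Φ (t+1)) ≤
      c * ((Θ t) ⬝ᵥ (Θ t) + (Φ t) ⬝ᵥ (Φ t)) := by
    intro t
    set θ := Θ t with hθdef; set φ := Φ t with hφdef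
    set θ' := Θ (t+1) with hθ'def; set φ' := Φ (t+1) with hφ'def
    set p := B *ᵥ φ' with hp
    set q := Bᵀ *ᵥ θ' with hq
    have e1' : θ' = θ - η • (A *ᵥ θ) - η • p := hΘ t
    have e2' : φ' = φ + η • q + η • (C *ᵥ φ) := hΦ t
    have eq1 : θ' + η • p = ((1 : Matrix (Fin m) (Fin m) ℝ) - η • A) *ᵥ θ := by
      rw [sub_mulVec, one_mulVec, smul_mulVec, e1']
      abel
    have eq2 : φ' + (-η) • q = ((1 : Matrix (Fin n) (Fin n) ℝ) + η • C) *ᵥ φ := by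
      rw [add_mulVec, one_mulVec, smul_mulVec, e2']
      module
    have hcross : θ' ⬝ᵥ p = φ' ⬝ᵥ q := by
      rw [hp, hq, dotProduct_comm, mulVec_dot]
    -- lower bound for LHS
    have hpp : μ * (φ' ⬝ᵥ φ') ≤ p ⬝ᵥ p := by
      have h1 : p ⬝ᵥ p = φ' ⬝ᵥ ((Bᵀ * B) *ᵥ φ') := by
        rw [hp, mulVec_dot, mulVec_mulVec]
      have h2 := rayleigh hBtB (fun i => hlmin₂.2 ⟨i, rfl⟩) φ'
      have h3 : μ ≤ lmin₂ := hμ ▸ min_le_right _ _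
      rw [h1]
      calc μ * (φ' ⬝ᵥ φ') ≤ lmin₂ * (φ' ⬝ᵥ φ') :=
            mul_le_mul_of_nonneg_right h3 (dot_self_nonneg _)
        _ ≤ _ := h2
    have hqq : μ * (θ' ⬝ᵥ θ') ≤ q ⬝ᵥ q := by
      have h1 : q ⬝ᵥ q = θ' ⬝ᵥ ((B * Bᵀ) *ᵥ θ') := by
        rw [hq, mulVec_dot, transpose_transpose, mulVec_mulVec]
      have h2 := rayleigh hBBt (fun i => hlmin₁.2 ⟨i, rfl⟩) θ'
      have h3 : μ ≤ lmin₁ := hμ ▸ min_le_left _ _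
      rw [h1]
      calc μ * (θ' ⬝ᵥ θ') ≤ lmin₁ * (θ' ⬝ᵥ θ') :=
            mul_le_mul_of_nonneg_right h3 (dot_self_nonneg _)
        _ ≤ _ := h2
    have hL1 : (θ' + η • p) ⬝ᵥ (θ' + η • p) = θ' ⬝ᵥ θ' + 2*η*(θ' ⬝ᵥ p) + η^2 * (p ⬝ᵥ p) :=
      dot_expand θ' p η
    have hL2 : (φ' + (-η) • q) ⬝ᵥ (φ' + (-η) • q) =
        φ' ⬝ᵥ φ' - 2*η*(φ' ⬝ᵥ q) + η^2 * (q ⬝ᵥ q) := by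
      rw [dot_expand]; ring
    set NA := ‖Matrix.toEuclideanCLM (𝕜 := ℝ) ((1 : Matrix (Fin m) (Fin m) ℝ) - η • A)‖ with hNA
    set NC := ‖Matrix.toEuclideanCLM (𝕜 := ℝ) ((1 : Matrix (Fin n) (Fin n) ℝ) + η • C)‖ with hNC
    set mx := max (NA^2) (NC^2) with hmx
    have hR1 : (θ' + η • p) ⬝ᵥ (θ' + η • p) ≤ mx * (θ ⬝ᵥ θ) := by
      rw [eq1]
      exact (opnorm_mulVec _ θ).trans
        (mul_le_mul_of_nonneg_right (le_max_left _ _) (dot_self_nonneg _))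
    have hR2 : (φ' + (-η) • q) ⬝ᵥ (φ' + (-η) • q) ≤ mx * (φ ⬝ᵥ φ) := by
      rw [eq2]
      exact (opnorm_mulVec _ φ).trans
        (mul_le_mul_of_nonneg_right (le_max_right _ _) (dot_self_nonneg _))
    -- combine
    have e1 : η^2*μ*(φ' ⬝ᵥ φ') ≤ η^2 * (p ⬝ᵥ p) := by
      have := mul_le_mul_of_nonneg_left hpp (sq_nonneg η)
      rw [← mul_assoc] at this; exact this
    have e2 : η^2*μ*(θ' ⬝ᵥ θ') ≤ η^2 * (q ⬝ᵥ q) := by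
      have := mul_le_mul_of_nonneg_left hqq (sq_nonneg η)
      rw [← mul_assoc] at this; exact this
    have hcross2 : 2*η*(θ' ⬝ᵥ p) = 2*η*(φ' ⬝ᵥ q) := by rw [hcross]
    have hsum' : θ' ⬝ᵥ θ' + φ' ⬝ᵥ φ' + η^2*μ*(θ' ⬝ᵥ θ') + η^2*μ*(φ' ⬝ᵥ φ') ≤
        mx * (θ ⬝ᵥ θ) + mx * (φ ⬝ᵥ φ) := by
      linarith [hL1, hL2, hR1, hR2, e1, e2, hcross2]
    have hsum : (1 + η^2*μ) * (θ' ⬝ᵥ θ' + φ' ⬝ᵥ φ') ≤ mx * (θ ⬝ᵥ θ + φ ⬝ᵥ φ) := by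
      have hid1 : (1 + η^2*μ) * (θ' ⬝ᵥ θ' + φ' ⬝ᵥ φ') =
          θ' ⬝ᵥ θ' + φ' ⬝ᵥ φ' + η^2*μ*(θ' ⬝ᵥ θ') + η^2*μ*(φ' ⬝ᵥ φ') := by ring
      have hid2 : mx * (θ ⬝ᵥ θ + φ ⬝ᵥ φ) = mx * (θ ⬝ᵥ θ) + mx * (φ ⬝ᵥ φ) := by ring
      rw [hid1, hid2]; exact hsum'
    have hcval : c * (θ ⬝ᵥ θ + φ ⬝ᵥ φ) = mx * (θ ⬝ᵥ θ + φ ⬝ᵥ φ) / (1 + η^2*μ) := by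
      rw [hc]; ring
    rw [hcval, le_div_iff₀ hden]
    calc (θ' ⬝ᵥ θ' + φ' ⬝ᵥ φ') * (1 + η^2*μ) = (1 + η^2*μ) * (θ' ⬝ᵥ θ' + φ' ⬝ᵥ φ') := by ring
      _ ≤ _ := hsum
  -- geometric decay
  have decay : ∀ t : ℕ, eNormSq (Θ t) + eNormSq (Φ t) ≤
      c ^ t * (eNormSq (Θ 0) + eNormSq (Φ 0)) := by
    intro t
    simp only [eNormSq_eq_dot]
    induction t with
    | zero => simp
    | succ t ih =>
      calc (Θ (t+1)) ⬝ᵥ (Θ (t+1)) + (Φ (t+1)) ⬝ᵥ (Φ (t+1))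
          ≤ c * ((Θ t) ⬝ᵥ (Θ t) + (Φ t) ⬝ᵥ (Φ t)) := key t
        _ ≤ c * (c ^ t * ((Θ 0) ⬝ᵥ (Θ 0) + (Φ 0) ⬝ᵥ (Φ 0))) :=
            mul_le_mul_of_nonneg_left ih hc0
        _ = c ^ (t+1) * ((Θ 0) ⬝ᵥ (Θ 0) + (Φ 0) ⬝ᵥ (Φ 0)) := by ring
  refine ⟨decay, ?_⟩
  -- convergence
  have hgeo : Tendsto (fun t : ℕ => c ^ t * (eNormSq (Θ 0) + eNormSq (Φ 0))) atTop (𝓝 0) := by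
    simpa using (tendsto_pow_atTop_nhds_zero_of_lt_one hc0 hc1).mul_const
      (eNormSq (Θ 0) + eNormSq (Φ 0))
  have hΘsq : Tendsto (fun t => eNormSq (Θ t)) atTop (𝓝 0) := by
    refine squeeze_zero (fun t => by rw [eNormSq_eq_dot]; exact dot_self_nonneg _)
      (fun t => ?_) hgeo
    have := decay t
    have h0 : 0 ≤ eNormSq (Φ t) := by rw [eNormSq_eq_dot]; exact dot_self_nonneg _
    linarith
  have hΦsq : Tendsto (fun t => eNormSq (Φ t)) atTop (𝓝 0) := by
    refine squeeze_zero (fun t => by rw [eNormSq_eq_dot]; exact dot_self_nonneg _)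
      (fun t => ?_) hgeo
    have := decay t
    have h0 : 0 ≤ eNormSq (Θ t) := by rw [eNormSq_eq_dot]; exact dot_self_nonneg _
    linarith
  have tendsto_of_sq : ∀ {ι : Type} [Fintype ι] (v : ℕ → ι → ℝ),
      Tendsto (fun t => eNormSq (v t)) atTop (𝓝 0) → Tendsto v atTop (𝓝 0) := by
    intro ι _ v hv
    have hnorm : Tendsto (fun t => ‖(EuclideanSpace.equiv ι ℝ).symm (v t)‖) atTop (𝓝 0) := by
      have h := (Real.continuous_sqrt.tendsto 0).comp hv
      rw [Real.sqrt_zero] at h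
      have heq : (fun t => ‖(EuclideanSpace.equiv ι ℝ).symm (v t)‖) =
          Real.sqrt ∘ (fun t => eNormSq (v t)) := by
        funext t
        simp [Function.comp, eNormSq, Real.sqrt_sq (norm_nonneg _)]
      rw [heq]
      exact h
    have h2 : Tendsto (fun t => (EuclideanSpace.equiv ι ℝ).symm (v t)) atTop (𝓝 0) :=
      tendsto_zero_iff_norm_tendsto_zero.mpr hnorm
    have h3 := ((EuclideanSpace.equiv ι ℝ).continuous.tendsto 0).comp h2
    exact h3
  exact (tendsto_of_sq Θ hΘsq).prodMk_nhds (tendsto_of_sq Φ hΦsq)
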